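/- Let G, G₀, G₁ be groups, let φ : G₁ → G be a surjective group homomorphism, and let ψ : G₀ → G be an injective group homomorphism. Assume that the commutator subgroup of G₁ is finitely generated, and assume that G has the Rapaport property: if the commutator subgroup of G is finitely generated then it is a free group. Then the commutator subgroup of G₀ is a free group. -/
import Mathlib

/-- Silver's argument: given a surjection `φ : G₁ →* G` with the commutator
subgroup of `G₁` finitely generated, and an injection `ψ : G₀ →* G`, if `G`
satisfies the Rapaport property (a finitely generated commutator subgroup of
`G` is free), then the commutator subgroup of `G₀` is a free group. -/
theorem commutator_free_of_ribbon_concordance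
    {G G₀ G₁ : Type*} [Group G] [Group G₀] [Group G₁]
    (φ : G₁ →* G) (hφ : Function.Surjective φ)
    (ψ : G₀ →* G) (hψ : Function.Injective ψ)
    (hfg : Group.FG (commutator G₁))
    (hRapaport : Group.FG (commutator G) → IsFreeGroup (commutator G)) :
    IsFreeGroup (commutator G₀) := by
  have hmap : (commutator G₁).map φ = commutator G := by
    rw [commutator_def, commutator_def, Subgroup.map_commutator,
      Subgroup.map_top_of_surjective φ hφ]
  -- commutator G is finitely generated
  have hfgG : Group.FG (commutator G) := by
    have : Group.FG ((commutator G₁).map φ) :=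
      Group.fg_of_surjective (φ.subgroupMap_surjective (commutator G₁))
    rwa [hmap] at this
  have hfree : IsFreeGroup (commutator G) := hRapaport hfgG
  -- embed commutator G₀ into commutator G
  have hle : (commutator G₀).map ψ ≤ commutator G := by
    rw [commutator_def, commutator_def, Subgroup.map_commutator]
    exact Subgroup.commutator_mono le_top le_top
  let e : commutator G₀ ≃* ((commutator G₀).map ψ).subgroupOf (commutator G) :=
    ((Subgroup.equivMapOfInjective _ ψ hψ).trans
      (Subgroup.subgroupOfEquivOfLe hle).symm)
  exact IsFreeGroup.ofMulEquiv e.symm
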